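/- Let k ≠ 0 be real and let γ, α be real. Then the determinant of the Schur complement S = D·R(γα)·D⁻¹·R(2πγ) − R(γα) equals ( (k+1)²·sin²(πγ) − (k−1)²·sin²(γ(α−π)) ) / k. -/

import Mathlib

/-- The 2×2 rotation-type matrix `R(ω)` with rows `(cos ω, sin ω)` and `(−sin ω, cos ω)`. -/
noncomputable def rotMat (ω : ℝ) : Matrix (Fin 2) (Fin 2) ℝ :=
  !![Real.cos ω, Real.sin ω; -Real.sin ω, Real.cos ω]

/-- The diagonal matrix `D = diag(1, k)`. -/
def diagMat (k : ℝ) : Matrix (Fin 2) (Fin 2) ℝ := !![1, 0; 0, k]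

lemma diagMat_inv (k : ℝ) (hk : k ≠ 0) : (diagMat k)⁻¹ = !![1, 0; 0, k⁻¹] := by
  apply Matrix.inv_eq_right_inv
  rw [Matrix.one_fin_two]
  simp [diagMat, Matrix.mul_fin_two, hk]

/-- for `k ≠ 0` and real `γ, α`, the determinant of the Schur
complement `S = D·R(γα)·D⁻¹·R(2πγ) − R(γα)` equals
`((k+1)²·sin²(πγ) − (k−1)²·sin²(γ(α−π)))/k`. -/
theorem det_schurComplement (k γ α : ℝ) (hk : k ≠ 0) :
    (diagMat k * rotMat (γ * α) * (diagMat k)⁻¹ * rotMat (2 * Real.pi * γ)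
        - rotMat (γ * α)).det
      = ((k + 1) ^ 2 * Real.sin (Real.pi * γ) ^ 2
          - (k - 1) ^ 2 * Real.sin (γ * (α - Real.pi)) ^ 2) / k := by
  rw [diagMat_inv k hk]
  set a := γ * α with ha
  set b := 2 * Real.pi * γ with hbdef
  have h1 : Real.sin a ^ 2 + Real.cos a ^ 2 = 1 := Real.sin_sq_add_cos_sq a
  have h2 : Real.sin b ^ 2 + Real.cos b ^ 2 = 1 := Real.sin_sq_add_cos_sq b
  have hsb : Real.sin (Real.pi * γ) ^ 2 = (1 - Real.cos b) / 2 := by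
    have hb2 : b = 2 * (Real.pi * γ) := by rw [hbdef]; ring
    rw [hb2, Real.cos_two_mul]
    have := Real.sin_sq_add_cos_sq (Real.pi * γ)
    nlinarith [this]
  have hsab : Real.sin (γ * (α - Real.pi)) ^ 2
      = (1 - ((2 * Real.cos a ^ 2 - 1) * Real.cos b
          + 2 * Real.sin a * Real.cos a * Real.sin b)) / 2 := by
    have hx : γ * (α - Real.pi) = a - Real.pi * γ := by rw [ha]; ring
    have h3 : Real.cos (2 * (a - Real.pi * γ)) = Real.cos (2 * a - b) := by
      rw [hbdef]; ring_nf
    have h4 : Real.cos (2 * (a - Real.pi * γ))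
        = 1 - 2 * Real.sin (a - Real.pi * γ) ^ 2 := by
      rw [Real.cos_two_mul]
      have := Real.sin_sq_add_cos_sq (a - Real.pi * γ)
      nlinarith [this]
    have h5 : Real.cos (2 * a - b)
        = (2 * Real.cos a ^ 2 - 1) * Real.cos b + 2 * Real.sin a * Real.cos a * Real.sin b := by
      rw [Real.cos_sub, Real.cos_two_mul, Real.sin_two_mul]
    rw [hx]
    nlinarith [h3, h4, h5]
  rw [hsb, hsab]
  simp only [rotMat, diagMat, Matrix.mul_fin_two, Matrix.sub_apply, Matrix.det_fin_two_of,
    Matrix.cons_val', Matrix.cons_val_zero, Matrix.cons_val_one, Matrix.head_cons,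
    Matrix.head_fin_const, Matrix.empty_val', Matrix.cons_val_fin_one,
    Matrix.of_sub_of, Matrix.cons_sub_cons, Matrix.empty_sub_empty]
  set ca := Real.cos a
  set sa := Real.sin a
  set cb := Real.cos b
  set sb := Real.sin b
  field_simp
  linear_combination (2 * k * (-cb + k + k * sb ^ 2 + k * cb ^ 2 - k ^ 2 * cb)) * h1 + 2 * k ^ 2 * h2
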